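/- Let C ⊆ R^N be a nonempty closed convex cone and Y a standard Gaussian vector in R^N. Then w(C ∩ B₂^N) ≤ E ‖P_C Y‖, where P_C denotes the metric projection onto C and w denotes Gaussian width. -/

import Mathlib

set_option maxHeartbeats 1000000

open MeasureTheory ProbabilityTheory Real
open scoped RealInnerProductSpace

/-- The Gaussian width of a set `S ⊆ ℝ^N`. -/
noncomputable def gaussianWidth {N : ℕ} (S : Set (EuclideanSpace ℝ (Fin N))) : ℝ :=
  ∫ y : Fin N → ℝ,
    sSup ((fun x : EuclideanSpace ℝ (Fin N) => ∑ i, y i * x i) '' S)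
    ∂(Measure.pi fun _ : Fin N => gaussianReal 0 1)

lemma my_integrable_abs_gaussianReal : Integrable (fun x : ℝ => |x|) (gaussianReal 0 1) := by
  rw [gaussianReal_of_var_ne_zero 0 one_ne_zero, gaussianPDF_def]
  rw [integrable_withDensity_iff ((measurable_gaussianPDFReal 0 1).ennreal_ofReal)
    (Filter.Eventually.of_forall fun x => ENNReal.ofReal_lt_top)]
  have h : Integrable (fun x : ℝ => (√(2 * π))⁻¹ * |x * rexp (-(1/2) * x ^ 2)|) :=
    ((integrable_mul_exp_neg_mul_sq (by norm_num : (0:ℝ) < 1/2)).abs).const_mul _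
  refine h.congr (Filter.Eventually.of_forall fun x => ?_)
  dsimp only
  rw [ENNReal.toReal_ofReal (gaussianPDFReal_nonneg _ _ _), gaussianPDFReal]
  rw [abs_mul, Real.abs_exp]
  push_cast
  rw [show -(1/2 : ℝ) * x ^ 2 = -(x - 0) ^ 2 / (2 * 1) by ring]
  ring_nf

lemma my_measurePreserving_eval {N : ℕ} (μ : Fin N → Measure ℝ)
    [∀ i, IsProbabilityMeasure (μ i)] (i : Fin N) :
    MeasurePreserving (Function.eval i) (Measure.pi μ) (μ i) := by
  classical
  refine ⟨measurable_pi_apply i, ?_⟩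
  ext s hs
  rw [Measure.map_apply (measurable_pi_apply i) hs]
  have h : Function.eval i ⁻¹' s =
      Set.pi Set.univ (Function.update (fun _ : Fin N => (Set.univ : Set ℝ)) i s) := by
    ext y
    simp only [Set.mem_preimage, Set.mem_pi, Set.mem_univ, true_implies, Function.eval]
    constructor
    · intro hy j
      rcases eq_or_ne j i with rfl | hj
      · simpa using hy
      · simp [Function.update, hj]
    · intro hy
      simpa using hy i
  rw [h, Measure.pi_pi]
  rw [Finset.prod_eq_single i (fun j _ hj => by simp [Function.update, hj]) (by simp)]
  simp

theorem gaussianWidth_cone_le_expected_norm_proj (N : ℕ)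
    (C : Set (EuclideanSpace ℝ (Fin N))) (hne : C.Nonempty) (hcl : IsClosed C)
    (hconv : Convex ℝ C) (hcone : ∀ (c : ℝ), 0 < c → ∀ x ∈ C, c • x ∈ C)
    (P : EuclideanSpace ℝ (Fin N) → EuclideanSpace ℝ (Fin N))
    (hP : ∀ x, P x ∈ C ∧ ∀ z ∈ C, ‖x - P x‖ ≤ ‖x - z‖) :
    gaussianWidth (C ∩ Metric.closedBall 0 1) ≤
      ∫ y : Fin N → ℝ, ‖P (WithLp.toLp 2 y)‖ ∂(Measure.pi fun _ : Fin N => gaussianReal 0 1) := by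
  classical
  obtain ⟨x0, hx0⟩ := hne
  -- 0 ∈ C
  have h0C : (0 : EuclideanSpace ℝ (Fin N)) ∈ C := by
    have htd : Filter.Tendsto (fun n : ℕ => (1 / ((n : ℝ) + 1)) • x0) Filter.atTop (nhds 0) := by
      have := (tendsto_one_div_add_atTop_nhds_zero_nat :
        Filter.Tendsto (fun n : ℕ => 1 / ((n : ℝ) + 1)) Filter.atTop (nhds 0)).smul_const x0
      rwa [zero_smul] at this
    exact hcl.mem_of_tendsto htd (Filter.Eventually.of_forall fun n =>
      hcone _ (by positivity) _ hx0)
  -- variational characterization of the projection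
  have hvar : ∀ y : EuclideanSpace ℝ (Fin N), ∀ z ∈ C, ⟪y - P y, z - P y⟫ ≤ 0 := by
    intro y
    haveI : Nonempty C := ⟨⟨P y, (hP y).1⟩⟩
    rw [← norm_eq_iInf_iff_real_inner_le_zero hconv (hP y).1]
    refine le_antisymm (le_ciInf fun w => (hP y).2 w w.2) ?_
    have hbdd : BddBelow (Set.range fun w : C => ‖y - (w : EuclideanSpace ℝ (Fin N))‖) :=
      ⟨0, by rintro _ ⟨w, rfl⟩; exact norm_nonneg _⟩
    exact ciInf_le hbdd ⟨P y, (hP y).1⟩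
  -- C is closed under addition
  have hadd : ∀ a ∈ C, ∀ b ∈ C, a + b ∈ C := by
    intro a ha b hb
    have hm : (1/2 : ℝ) • a + (1/2 : ℝ) • b ∈ C :=
      hconv ha hb (by norm_num) (by norm_num) (by norm_num)
    have := hcone 2 (by norm_num) _ hm
    rwa [smul_add, smul_smul, smul_smul, show (2 : ℝ) * (1/2) = 1 by norm_num, one_smul, one_smul] at this
  -- key pointwise bound
  have key : ∀ y : EuclideanSpace ℝ (Fin N), ∀ x ∈ C ∩ Metric.closedBall 0 1,
      ⟪y, x⟫ ≤ ‖P y‖ := by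
    intro y x hx
    obtain ⟨hxC, hxB⟩ := hx
    have hxn : ‖x‖ ≤ 1 := by simpa [mem_closedBall_zero_iff] using hxB
    have h1 : ⟪y - P y, x⟫ ≤ 0 := by
      have := hvar y (P y + x) (hadd _ (hP y).1 _ hxC)
      rwa [add_sub_cancel_left] at this
    have h2 : ⟪P y, x⟫ ≤ ‖P y‖ := by
      calc ⟪P y, x⟫ ≤ ‖P y‖ * ‖x‖ := real_inner_le_norm _ _
        _ ≤ ‖P y‖ * 1 := by
            exact mul_le_mul_of_nonneg_left hxn (norm_nonneg _)
        _ = ‖P y‖ := mul_one _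
    calc ⟪y, x⟫ = ⟪y - P y, x⟫ + ⟪P y, x⟫ := by rw [← inner_add_left]; congr 1; abel
      _ ≤ 0 + ‖P y‖ := add_le_add h1 h2
      _ = ‖P y‖ := zero_add _
  -- pointwise bound in summation form
  have key' : ∀ y : Fin N → ℝ, ∀ a ∈ ((fun x : EuclideanSpace ℝ (Fin N) => ∑ i, y i * x i) ''
      (C ∩ Metric.closedBall 0 1)), a ≤ ‖P (WithLp.toLp 2 y)‖ := by
    rintro y a ⟨x, hx, rfl⟩
    have := key (WithLp.toLp 2 y) x hx
    simpa [PiLp.inner_apply, RCLike.inner_apply, conj_trivial, mul_comm] using this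
  -- nonnegativity of the sup
  have hnonneg : ∀ y : Fin N → ℝ, 0 ≤
      sSup ((fun x : EuclideanSpace ℝ (Fin N) => ∑ i, y i * x i) ''
        (C ∩ Metric.closedBall 0 1)) := by
    intro y
    refine le_csSup ⟨‖P (WithLp.toLp 2 y)‖, fun a ha => key' y a ha⟩ ?_
    exact ⟨0, ⟨h0C, by simp⟩, by simp⟩
  -- the projection is 1-Lipschitz
  have hlip : ∀ u v : EuclideanSpace ℝ (Fin N), ‖P u - P v‖ ≤ ‖u - v‖ := by
    intro u v
    set d := P u - P v with hd
    have e1 : 0 ≤ ⟪u - P u, d⟫ := by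
      have := hvar u (P v) (hP v).1
      rw [show P v - P u = -d by rw [hd]; abel, inner_neg_right] at this
      linarith
    have e2 : ⟪v - P v, d⟫ ≤ 0 := hvar v (P u) (hP u).1
    have hsub : ⟪u - v - d, d⟫ = ⟪u - P u, d⟫ - ⟪v - P v, d⟫ := by
      rw [← inner_sub_left]; congr 1; rw [hd]; abel
    have h3 : ‖d‖ ^ 2 ≤ ⟪u - v, d⟫ := by
      have h4 : 0 ≤ ⟪u - v - d, d⟫ := by rw [hsub]; linarith
      rw [inner_sub_left, real_inner_self_eq_norm_sq] at h4
      linarith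
    have h5 : ‖d‖ ^ 2 ≤ ‖u - v‖ * ‖d‖ := h3.trans (real_inner_le_norm _ _)
    rcases (norm_nonneg d).eq_or_lt with h | h
    · rw [← h]; exact norm_nonneg _
    · exact (mul_le_mul_iff_of_pos_right h).mp (by nlinarith [h5])
  -- P 0 = 0
  have hP0 : P 0 = 0 := by
    have h := (hP 0).2 0 h0C
    simp only [sub_zero, zero_sub, norm_neg, norm_zero] at h
    have : ‖P 0‖ = 0 := le_antisymm h (norm_nonneg _)
    simpa [norm_eq_zero] using this
  -- ‖P y‖ ≤ ‖y‖
  have hPnorm : ∀ y : EuclideanSpace ℝ (Fin N), ‖P y‖ ≤ ‖y‖ := by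
    intro y
    have := hlip y 0
    simpa [hP0] using this
  -- continuity of P
  have hPcont : Continuous P := by
    have : LipschitzWith 1 P := by
      refine LipschitzWith.of_dist_le_mul fun u v => ?_
      simpa [dist_eq_norm] using hlip u v
    exact this.continuous
  -- integrability of the dominating function
  have hdom : Integrable (fun y : Fin N → ℝ => ∑ i, |y i|)
      (Measure.pi fun _ : Fin N => gaussianReal 0 1) := by
    refine integrable_finset_sum _ fun i _ => ?_
    exact ((my_measurePreserving_eval (fun _ => gaussianReal 0 1) i).integrable_comp
      my_integrable_abs_gaussianReal.aestronglyMeasurable).mpr my_integrable_abs_gaussianReal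
  -- ‖y‖₂ ≤ ∑ |y i|
  have hl2l1 : ∀ y : EuclideanSpace ℝ (Fin N), ‖y‖ ≤ ∑ i, |y i| := by
    intro y
    rw [EuclideanSpace.norm_eq]
    simp only [Real.norm_eq_abs]
    have h1 : ∑ i, |y i| ^ 2 ≤ (∑ i, |y i|) ^ 2 :=
      Finset.sum_sq_le_sq_sum_of_nonneg fun i _ => abs_nonneg _
    calc √(∑ i, |y i| ^ 2) ≤ √((∑ i, |y i|) ^ 2) := Real.sqrt_le_sqrt h1
      _ = ∑ i, |y i| := Real.sqrt_sq (Finset.sum_nonneg fun i _ => abs_nonneg _)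
  -- integrability of y ↦ ‖P y‖
  have hgmeas : Continuous fun y : Fin N → ℝ => ‖P (WithLp.toLp 2 y)‖ :=
    continuous_norm.comp (hPcont.comp (PiLp.continuous_toLp 2 fun _ : Fin N => ℝ))
  have hgint : Integrable (fun y : Fin N → ℝ => ‖P (WithLp.toLp 2 y)‖)
      (Measure.pi fun _ : Fin N => gaussianReal 0 1) := by
    refine hdom.mono hgmeas.aestronglyMeasurable (Filter.Eventually.of_forall fun y => ?_)
    rw [Real.norm_eq_abs, abs_of_nonneg (norm_nonneg _)]
    refine (hPnorm (WithLp.toLp 2 y)).trans ?_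
    refine (hl2l1 (WithLp.toLp 2 y)).trans ?_
    exact le_abs_self _
  -- conclude
  rw [gaussianWidth]
  refine integral_mono_of_nonneg (Filter.Eventually.of_forall hnonneg) hgint
    (Filter.Eventually.of_forall fun y => ?_)
  exact Real.sSup_le (key' y) (norm_nonneg _)
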